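/- Let x, y ∈ V(T) and n ∈ ℕ with [B_n(x)] = [B_n(y)] and [B_{n+1}(x)] ≠ [B_{n+1}(y)]. Then for each 1 ≤ m ≤ n there exist vertices x' with d(x, x') = m and y' with d(y, y') = m such that [B_{n−m+1}(x')] ≠ [B_{n−m+1}(y')] and [B_{n−m}(x')] = [B_{n−m}(y')]. Consequently, if the colored n-ball [B_n(x)] is special, then for every l < n there is a vertex x' with d(x, x') = n − l such that [B_l(x')] is special. -/

import Mathlib

open SimpleGraph

/-- Equivalence of colored `n`-balls around `x` and `y`: a graph isomorphism between the
induced subgraphs on the balls, sending center to center and preserving the coloring. -/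
def BallEquiv {V A : Type*} (T : SimpleGraph V) (φ : V → A) (n : ℕ) (x y : V) : Prop :=
  ∃ f : {v : V // T.dist x v ≤ n} ≃ {v : V // T.dist y v ≤ n},
    ((f ⟨x, by simp [SimpleGraph.dist_self]⟩ : {v : V // T.dist y v ≤ n}) : V) = y ∧
    (∀ u w : {v : V // T.dist x v ≤ n}, T.Adj (u : V) (w : V) ↔ T.Adj (f u : V) (f w : V)) ∧
    ∀ v : {v : V // T.dist x v ≤ n}, φ (f v : V) = φ (v : V)

/-- Two vertices are in the same class if a color-preserving automorphism of `T`
sends one to the other. -/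
def SameClass {V A : Type*} (T : SimpleGraph V) (φ : V → A) (x y : V) : Prop :=
  ∃ g : V ≃ V, (∀ u w : V, T.Adj (g u) (g w) ↔ T.Adj u w) ∧ g x = y ∧ ∀ v, φ (g v) = φ v

/-- Subword complexity: the number of equivalence classes of colored `n`-balls. -/
noncomputable def ballComplexity {V A : Type*} (T : SimpleGraph V) (φ : V → A) (n : ℕ) : ℕ :=
  Nat.card (Quot (BallEquiv T φ n))

/-- A coloring is periodic if it is invariant under a subgroup of the automorphism group
of `T` having finitely many orbits on vertices. -/
def IsPeriodicColoring {V A : Type*} (T : SimpleGraph V) (φ : V → A) : Prop :=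
  ∃ Γ : Subgroup (Equiv.Perm V),
    (∀ γ ∈ Γ, ∀ u w : V, T.Adj (γ u) (γ w) ↔ T.Adj u w) ∧
    (∀ γ ∈ Γ, ∀ v, φ (γ v) = φ v) ∧
    Finite (Quot (fun x y : V => ∃ γ ∈ Γ, γ x = y))

/-- The colored `n`-ball around `x` is special. -/
def IsSpecial {V A : Type*} (T : SimpleGraph V) (φ : V → A) (n : ℕ) (x : V) : Prop :=
  ∃ y z : V, BallEquiv T φ n x y ∧ BallEquiv T φ n x z ∧ ¬ BallEquiv T φ (n + 1) y z

/-- The type set of a vertex. -/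
def TypeSet {V A : Type*} (T : SimpleGraph V) (φ : V → A) (x : V) : Set ℕ :=
  {n : ℕ | IsSpecial T φ n x}

/-- The maximal type of a vertex of bounded type (`-1` if the type set is empty). -/
noncomputable def maxType {V A : Type*} (T : SimpleGraph V) (φ : V → A) (x : V) : ℤ :=
  sSup (insert (-1) ((fun n : ℕ => (n : ℤ)) '' TypeSet T φ x))

/-- The coloring is Sturmian if its subword complexity is `n + 2`. -/
def IsSturmian {V A : Type*} (T : SimpleGraph V) (φ : V → A) : Prop :=
  ∀ n : ℕ, ballComplexity T φ n = n + 2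

/-- Eventually periodic coloring. -/
def IsEventuallyPeriodic {V A : Type*} (T : SimpleGraph V) (φ : V → A) : Prop :=
  ∃ K : Set V, K.Nonempty ∧ K.Finite ∧ (T.induce K).Connected ∧
    ∀ v : (Kᶜ : Set V), ∃ ψ : V → A, IsPeriodicColoring T ψ ∧
      ∀ w : (Kᶜ : Set V), (T.induce (Kᶜ : Set V)).Reachable v w → ψ (w : V) = φ (w : V)

/-- The vertex set of the `n`-branch from `x` towards its neighbor `x'`. -/
def branchSet {V : Type*} (T : SimpleGraph V) (n : ℕ) (x x' : V) : Set V :=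
  insert x {y : V | T.dist x y ≤ n ∧ T.dist y x' < T.dist y x}

/-- Equivalence of colored `n`-branches. -/
def BranchEquiv {V A : Type*} (T : SimpleGraph V) (φ : V → A) (n : ℕ)
    (x x' y y' : V) : Prop :=
  ∃ f : (branchSet T n x x') ≃ (branchSet T n y y'),
    ((f ⟨x, Set.mem_insert x _⟩ : (branchSet T n y y')) : V) = y ∧
    (∀ u w : (branchSet T n x x'), T.Adj (u : V) (w : V) ↔ T.Adj (f u : V) (f w : V)) ∧
    ∀ v : (branchSet T n x x'), φ (f v : V) = φ (v : V)

/-- A coloring of `K` appears exactly once if the only connected subgraph of `T`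
color-isomorphic to it is `K` itself. -/
def AppearsOnce {V A : Type*} (T : SimpleGraph V) (φ : V → A) (K : Set V) : Prop :=
  ∀ K' : Set V, (T.induce K').Connected →
    (∃ f : K ≃ K', (∀ u w : K, T.Adj (u : V) (w : V) ↔ T.Adj (f u : V) (f w : V)) ∧
      ∀ v : K, φ (f v : V) = φ (v : V)) → K' = K

namespace STAux

variable {V : Type*} {T : SimpleGraph V}

/-- On a geodesic walk, distances add up. -/
lemma geo_support (hc : T.Connected) {u v : V} {p : T.Walk u v}
    (hp : p.length = T.dist u v) {w : V} (hw : w ∈ p.support) :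
    T.dist u w + T.dist w v = T.dist u v := by
  classical
  refine le_antisymm ?_ (hc.dist_triangle)
  have h1 : T.dist u w ≤ (p.takeUntil w hw).length := T.dist_le _
  have h2 : T.dist w v ≤ (p.dropUntil w hw).length := T.dist_le _
  have h3 : (p.takeUntil w hw).length + (p.dropUntil w hw).length = p.length := by
    have h4 := congrArg Walk.length (p.take_spec hw)
    rwa [Walk.length_append] at h4
  omega

/-- Two distinct neighbors of `w` cannot both be one step closer to `x`. -/
lemma TP (hc : T.Connected) (ha : T.IsAcyclic) {x w u₁ u₂ : V}
    (h1 : T.Adj w u₁) (h2 : T.Adj w u₂) (hne : u₁ ≠ u₂)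
    (d1 : T.dist x u₁ + 1 = T.dist x w) (d2 : T.dist x u₂ + 1 = T.dist x w) : False := by
  obtain ⟨p₁, hp₁, hl₁⟩ := hc.exists_path_of_dist u₁ x
  obtain ⟨p₂, hp₂, hl₂⟩ := hc.exists_path_of_dist u₂ x
  have c1 : T.dist u₁ x = T.dist x u₁ := dist_comm
  have c2 : T.dist u₂ x = T.dist x u₂ := dist_comm
  have cw : T.dist w x = T.dist x w := dist_comm
  have hd1 : T.dist u₁ x = T.dist u₂ x := by omega
  have hq₁ : (Walk.cons h1 p₁).length = T.dist w x := by
    simp only [Walk.length_cons, hl₁]; omega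
  have hq₂ : (Walk.cons h2 p₂).length = T.dist w x := by
    simp only [Walk.length_cons, hl₂]; omega
  have hP₁ : (Walk.cons h1 p₁).IsPath := Walk.isPath_of_length_eq_dist _ hq₁
  have hP₂ : (Walk.cons h2 p₂).IsPath := Walk.isPath_of_length_eq_dist _ hq₂
  have := isAcyclic_iff_path_unique.mp ha ⟨Walk.cons h1 p₁, hP₁⟩ ⟨Walk.cons h2 p₂, hP₂⟩
  have hw : Walk.cons h1 p₁ = Walk.cons h2 p₂ := congrArg Subtype.val this
  have hu₁ : u₁ ∈ (Walk.cons h2 p₂).support := by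
    rw [← hw]; simp [Walk.support_cons]
  rw [Walk.support_cons] at hu₁
  rcases List.mem_cons.mp hu₁ with h | h
  · exact T.irrefl (h ▸ h1)
  · have h5 := geo_support hc hl₂ h
    rw [hd1] at h5
    have h6 : T.dist u₂ u₁ = 0 := by omega
    exact hne ((hc.dist_eq_zero_iff).mp h6).symm

/-- Adjacent vertices have distances to `x` differing by exactly one. -/
lemma adj_dist (hc : T.Connected) (ha : T.IsAcyclic) {x u a : V} (h : T.Adj u a) :
    T.dist x a = T.dist x u + 1 ∨ T.dist x u = T.dist x a + 1 := by
  have hua : T.dist u a = 1 := (T.dist_eq_one_iff_adj).mpr h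
  have hau : T.dist a u = 1 := (T.dist_eq_one_iff_adj).mpr h.symm
  have t1 : T.dist x a ≤ T.dist x u + 1 := by
    have := hc.dist_triangle (u := x) (v := u) (w := a); omega
  have t2 : T.dist x u ≤ T.dist x a + 1 := by
    have := hc.dist_triangle (u := x) (v := a) (w := u); omega
  have hne : T.dist x a ≠ T.dist x u := by
    intro heq
    obtain ⟨p, hp, hl⟩ := hc.exists_path_of_dist u x
    obtain ⟨q, hq, hlq⟩ := hc.exists_path_of_dist a x
    have hans : a ∉ p.support := by
      intro hmem
      have := geo_support hc hl hmem
      have c1 : T.dist u x = T.dist x u := dist_comm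
      have c2 : T.dist a x = T.dist x a := dist_comm
      omega
    have hP : (Walk.cons h.symm p).IsPath := hp.cons hans
    have := isAcyclic_iff_path_unique.mp ha ⟨Walk.cons h.symm p, hP⟩ ⟨q, hq⟩
    have hww : Walk.cons h.symm p = q := congrArg Subtype.val this
    have : (Walk.cons h.symm p).length = q.length := by rw [hww]
    rw [Walk.length_cons, hl, hlq] at this
    have c1 : T.dist u x = T.dist x u := dist_comm
    have c2 : T.dist a x = T.dist x a := dist_comm
    omega
  omega

/-- Once a path moves away from `x`, it keeps moving away. -/
lemma ascend (hc : T.Connected) (ha : T.IsAcyclic) {x : V} :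
    ∀ {a v : V} (p : T.Walk a v), p.IsPath → ∀ {u : V}, T.Adj u a →
      T.dist x a = T.dist x u + 1 → u ∉ p.support → T.dist x v = T.dist x a + p.length := by
  intro a v p
  induction p with
  | nil => intro _ u _ _ _; simp
  | cons hab q ih =>
    rename_i a b v'
    intro hp u hua hd hu
    rw [Walk.cons_isPath_iff] at hp
    have hbq : b ∈ (Walk.cons hab q).support := by simp [Walk.support_cons, Walk.start_mem_support]
    have hub : u ≠ b := by
      intro he; subst he; exact hu hbq
    rcases adj_dist hc ha (x := x) hab with h1 | h1
    · have haq : a ∉ q.support := hp.2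
      have := ih hp.1 hab h1 haq
      rw [Walk.length_cons]; omega
    · exact (TP hc ha (x := x) hua.symm hab hub (by omega) (by omega)).elim

/-- Along a path, distance to `x` is bounded by the endpoints' distances. -/
lemma path_support_le (hc : T.Connected) (ha : T.IsAcyclic) {x : V} :
    ∀ {u v : V} (p : T.Walk u v), p.IsPath → ∀ {w : V}, w ∈ p.support →
      T.dist x w ≤ max (T.dist x u) (T.dist x v) := by
  intro u v p
  induction p with
  | nil => intro _ w hw; simp at hw; subst hw; simp
  | cons hub q ih =>
    rename_i u b v'
    intro hp w hw
    rw [Walk.support_cons] at hw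
    rw [Walk.cons_isPath_iff] at hp
    rcases List.mem_cons.mp hw with h | h
    · subst h; exact le_max_left _ _
    rcases adj_dist hc ha (x := x) hub with h1 | h1
    · -- ascending: whole remaining path ascends
      classical
      have hv : T.dist x v' = T.dist x b + q.length := ascend hc ha q hp.1 hub h1 hp.2
      have hdw : T.dist b w ≤ q.length := by
        have h2 : T.dist b w ≤ (q.takeUntil w h).length := T.dist_le _
        have h3 := Walk.length_takeUntil_le q h
        omega
      have h4 := hc.dist_triangle (u := x) (v := b) (w := w)
      have h5 : T.dist x v' ≤ max (T.dist x u) (T.dist x v') := le_max_right _ _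
      omega
    · have := ih hp.1 h
      have h5 : T.dist x b ≤ T.dist x u := by omega
      rcases max_cases (T.dist x b) (T.dist x v') with ⟨he, _⟩ | ⟨he, _⟩ <;> rw [he] at this <;>
        [exact le_trans this (le_trans h5 (le_max_left _ _)); exact le_trans this (le_max_right _ _)]

/-- First step of a geodesic towards `v`. -/
lemma stepTowards (hc : T.Connected) {c v : V} (h : v ≠ c) :
    ∃ d, T.Adj c d ∧ T.dist d v + 1 = T.dist c v := by
  obtain ⟨p, hp, hl⟩ := hc.exists_path_of_dist c v
  cases p with
  | nil => exact absurd rfl h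
  | cons hcd q =>
    rename_i d
    refine ⟨d, hcd, ?_⟩
    have hmem : d ∈ (Walk.cons hcd q).support := by simp [Walk.support_cons, Walk.start_mem_support]
    have h1 := geo_support hc hl hmem
    have h2 : T.dist c d = 1 := (T.dist_eq_one_iff_adj).mpr hcd
    have h3 : T.dist c v ≠ 0 := by
      intro h0; exact h ((hc.dist_eq_zero_iff).mp h0).symm
    omega

/-- There is a geodesic between `u` and `v` whose support stays within distance
`max (dist x u) (dist x v)` of `x`. -/
lemma exists_geodesic_in_ball (hc : T.Connected) (ha : T.IsAcyclic) (x u v : V) :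
    ∃ p : T.Walk u v, p.length = T.dist u v ∧
      ∀ w ∈ p.support, T.dist x w ≤ max (T.dist x u) (T.dist x v) := by
  obtain ⟨p, hp, hl⟩ := hc.exists_path_of_dist u v
  exact ⟨p, hl, fun w hw => path_support_le hc ha p hp hw⟩

section Iso

variable {A : Type*} {φ : V → A}

/-- Color-and-adjacency preserving equivalence between two vertex subtypes. -/
def PIso (T : SimpleGraph V) (φ : V → A) {P Q : V → Prop} (f : {v // P v} ≃ {v // Q v}) : Prop :=
  (∀ u w : {v // P v}, T.Adj (u : V) (w : V) ↔ T.Adj (f u : V) (f w : V)) ∧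
    ∀ v : {v // P v}, φ (f v : V) = φ (v : V)

/-- Pointed color-preserving isomorphism between two vertex subtypes. -/
def EquivOn (T : SimpleGraph V) (φ : V → A) (P Q : V → Prop) (a b : V) : Prop :=
  ∃ f : {v // P v} ≃ {v // Q v}, PIso T φ f ∧ ∀ v : {v // P v}, (v : V) = a → (f v : V) = b

lemma PIso.symm {P Q : V → Prop} {f : {v // P v} ≃ {v // Q v}} (h : PIso T φ f) :
    PIso T φ f.symm := by
  constructor
  · intro u w
    have := h.1 (f.symm u) (f.symm w)
    simpa using this.symm
  · intro v
    have := h.2 (f.symm v)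
    simp only [Equiv.apply_symm_apply] at this
    exact this.symm

lemma EquivOn.symm {P Q : V → Prop} {a b : V} (hA : P a) (h : EquivOn T φ P Q a b) :
    EquivOn T φ Q P b a := by
  obtain ⟨f, hf, hcen⟩ := h
  refine ⟨f.symm, hf.symm, fun w hw => ?_⟩
  have h1 : (f ⟨a, hA⟩ : V) = b := hcen _ rfl
  have h2 : f ⟨a, hA⟩ = w := Subtype.ext (by rw [h1, hw])
  rw [← h2, Equiv.symm_apply_apply]

lemma EquivOn.trans {P Q R : V → Prop} {a b c : V}
    (h1 : EquivOn T φ P Q a b) (h2 : EquivOn T φ Q R b c) : EquivOn T φ P R a c := by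
  obtain ⟨f, hf, hfc⟩ := h1
  obtain ⟨g, hg, hgc⟩ := h2
  refine ⟨f.trans g, ⟨fun u w => ?_, fun v => ?_⟩, fun v hv => ?_⟩
  · exact (hf.1 u w).trans (hg.1 (f u) (f w))
  · exact (hg.2 (f v)).trans (hf.2 v)
  · exact hgc (f v) (hfc v hv)

/-- Restrict an equivalence between subtypes to smaller subtypes. -/
def restrictEquiv {P Q P' Q' : V → Prop} (f : {v // P v} ≃ {v // Q v})
    (h1 : ∀ v, P' v → P v) (h2 : ∀ w, Q' w → Q w)
    (hiff : ∀ (v : V) (hv : P v), P' v ↔ Q' (f ⟨v, hv⟩ : V)) :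
    {v // P' v} ≃ {w // Q' w} where
  toFun v := ⟨(f ⟨v, h1 v v.2⟩ : V), (hiff v (h1 v v.2)).1 v.2⟩
  invFun w := ⟨(f.symm ⟨w, h2 w w.2⟩ : V), by
    have hm := (f.symm ⟨w.1, h2 w w.2⟩).2
    refine (hiff _ hm).2 ?_
    have he : (⟨((f.symm ⟨w.1, h2 w w.2⟩ : {v // P v}) : V), hm⟩ : {v // P v}) =
        f.symm ⟨w.1, h2 w w.2⟩ := Subtype.coe_eta _ _
    rw [he, Equiv.apply_symm_apply]
    exact w.2⟩
  left_inv v := by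
    apply Subtype.ext
    show (f.symm ⟨(f ⟨v.1, _⟩ : V), _⟩ : V) = v.1
    rw [Subtype.coe_eta, Equiv.symm_apply_apply]
  right_inv w := by
    apply Subtype.ext
    show (f ⟨(f.symm ⟨w.1, _⟩ : V), _⟩ : V) = w.1
    rw [Subtype.coe_eta, Equiv.apply_symm_apply]

@[simp] lemma restrictEquiv_coe {P Q P' Q' : V → Prop} (f : {v // P v} ≃ {v // Q v})
    (h1 : ∀ v, P' v → P v) (h2 : ∀ w, Q' w → Q w)
    (hiff : ∀ (v : V) (hv : P v), P' v ↔ Q' (f ⟨v, hv⟩ : V)) (v : {v // P' v}) :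
    ((restrictEquiv f h1 h2 hiff) v : V) = (f ⟨(v : V), h1 v v.2⟩ : V) := rfl

lemma PIso.restrict {P Q P' Q' : V → Prop} {f : {v // P v} ≃ {v // Q v}} (hf : PIso T φ f)
    (h1 : ∀ v, P' v → P v) (h2 : ∀ w, Q' w → Q w)
    (hiff : ∀ (v : V) (hv : P v), P' v ↔ Q' (f ⟨v, hv⟩ : V)) :
    PIso T φ (restrictEquiv f h1 h2 hiff) := by
  constructor
  · intro u w; exact hf.1 ⟨u.1, h1 u u.2⟩ ⟨w.1, h1 w w.2⟩
  · intro v; exact hf.2 ⟨v.1, h1 v v.2⟩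

/-- Mapping a walk whose support lies in the ball through an adjacency-preserving map. -/
lemma walk_map {n : ℕ} {x y : V} (f : {v // T.dist x v ≤ n} ≃ {v // T.dist y v ≤ n})
    (hadj : ∀ u w : {v // T.dist x v ≤ n}, T.Adj (u : V) (w : V) ↔ T.Adj (f u : V) (f w : V)) :
    ∀ {a b : V} (p : T.Walk a b), (∀ w ∈ p.support, T.dist x w ≤ n) →
      ∀ (hA : T.dist x a ≤ n) (hB : T.dist x b ≤ n),
      ∃ q : T.Walk (f ⟨a, hA⟩ : V) (f ⟨b, hB⟩ : V), q.length = p.length := by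
  intro a b p
  induction p with
  | nil => intro _ hA hB; exact ⟨Walk.nil, by simp⟩
  | cons hab q ih =>
    rename_i a c b
    intro hs hA hB
    have hC : T.dist x c ≤ n := hs c (by simp [Walk.support_cons])
    have hadj' : T.Adj (f ⟨a, hA⟩ : V) (f ⟨c, hC⟩ : V) := (hadj _ _).1 hab
    obtain ⟨q', hq'⟩ := ih (fun w hw => hs w (by simp [Walk.support_cons, hw])) hC hB
    exact ⟨Walk.cons hadj' q', by simp [hq']⟩

lemma dist_le_map (hc : T.Connected) (ha : T.IsAcyclic) {n : ℕ} {x y : V}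
    (f : {v // T.dist x v ≤ n} ≃ {v // T.dist y v ≤ n})
    (hadj : ∀ u w : {v // T.dist x v ≤ n}, T.Adj (u : V) (w : V) ↔ T.Adj (f u : V) (f w : V))
    {u v : V} (hu : T.dist x u ≤ n) (hv : T.dist x v ≤ n) :
    T.dist (f ⟨u, hu⟩ : V) (f ⟨v, hv⟩ : V) ≤ T.dist u v := by
  obtain ⟨p, hl, hs⟩ := exists_geodesic_in_ball hc ha x u v
  obtain ⟨q, hq⟩ := walk_map f hadj p
    (fun w hw => le_trans (hs w hw) (max_le hu hv)) hu hv
  calc T.dist (f ⟨u, hu⟩ : V) (f ⟨v, hv⟩ : V) ≤ q.length := T.dist_le q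
  _ = T.dist u v := by rw [hq, hl]

/-- An adjacency preserving equivalence of balls preserves distances. -/
lemma dist_map (hc : T.Connected) (ha : T.IsAcyclic) {n : ℕ} {x y : V}
    (f : {v // T.dist x v ≤ n} ≃ {v // T.dist y v ≤ n})
    (hadj : ∀ u w : {v // T.dist x v ≤ n}, T.Adj (u : V) (w : V) ↔ T.Adj (f u : V) (f w : V))
    {u v : V} (hu : T.dist x u ≤ n) (hv : T.dist x v ≤ n) :
    T.dist (f ⟨u, hu⟩ : V) (f ⟨v, hv⟩ : V) = T.dist u v := by
  refine le_antisymm (dist_le_map hc ha f hadj hu hv) ?_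
  have hadj' : ∀ u w : {v // T.dist y v ≤ n},
      T.Adj (u : V) (w : V) ↔ T.Adj (f.symm u : V) (f.symm w : V) := by
    intro u w
    have := hadj (f.symm u) (f.symm w)
    simpa using this.symm
  have h2 := dist_le_map hc ha f.symm hadj' (f ⟨u, hu⟩).2 (f ⟨v, hv⟩).2
  have e1 : (f.symm ⟨(f ⟨u, hu⟩ : V), (f ⟨u, hu⟩).2⟩ : V) = u := by
    rw [Subtype.coe_eta, Equiv.symm_apply_apply]
  have e2 : (f.symm ⟨(f ⟨v, hv⟩ : V), (f ⟨v, hv⟩).2⟩ : V) = v := by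
    rw [Subtype.coe_eta, Equiv.symm_apply_apply]
  rwa [e1, e2] at h2

end Iso

section Cone

variable {A : Type*} {φ : V → A}

/-- `v` lies in the depth-`r` branch at `d` pointing away from `c` (for `c ~ d`). -/
def inCone (T : SimpleGraph V) (r : ℕ) (c d v : V) : Prop :=
  T.dist d v ≤ r ∧ T.dist c v = T.dist d v + 1

lemma inCone_self {r : ℕ} {c d : V} (h : T.Adj c d) : inCone T r c d d :=
  ⟨by simp [SimpleGraph.dist_self], by simp [SimpleGraph.dist_self, (T.dist_eq_one_iff_adj).mpr h]⟩

lemma inCone.ne_c {r : ℕ} {c d v : V} (h : inCone T r c d v) : v ≠ c := by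
  intro he
  have h2 := h.2
  rw [he, SimpleGraph.dist_self] at h2
  omega

lemma cone_dir_unique (hc : T.Connected) (ha : T.IsAcyclic) {c d₁ d₂ v : V}
    (h1 : T.Adj c d₁) (h2 : T.Adj c d₂)
    (m1 : T.dist c v = T.dist d₁ v + 1) (m2 : T.dist c v = T.dist d₂ v + 1) : d₁ = d₂ := by
  by_contra hne
  have c1 : T.dist v d₁ = T.dist d₁ v := dist_comm
  have c2 : T.dist v d₂ = T.dist d₂ v := dist_comm
  have cc : T.dist v c = T.dist c v := dist_comm
  exact TP hc ha (x := v) h1 h2 hne (by omega) (by omega)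

/-- Characterization of balls in terms of branches. -/
lemma ball_char (hc : T.Connected) {c v : V} {r : ℕ} :
    T.dist c v ≤ r + 1 ↔ (v = c ∨ ∃ d, T.Adj c d ∧ inCone T r c d v) := by
  constructor
  · intro hle
    by_cases hvc : v = c
    · exact Or.inl hvc
    · obtain ⟨d, hcd, hd⟩ := stepTowards hc hvc
      exact Or.inr ⟨d, hcd, ⟨by omega, by omega⟩⟩
  · rintro (rfl | ⟨d, hcd, h1, h2⟩)
    · simp [SimpleGraph.dist_self]
    · omega

/-- Characterization of branches in terms of deeper branches. -/
lemma cone_char (hc : T.Connected) (ha : T.IsAcyclic) {u c v : V} {r : ℕ} (huc : T.Adj u c) :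
    inCone T (r + 1) u c v ↔ (v = c ∨ ∃ d, (T.Adj c d ∧ d ≠ u) ∧ inCone T r c d v) := by
  constructor
  · rintro ⟨hle, heq⟩
    by_cases hvc : v = c
    · exact Or.inl hvc
    · obtain ⟨d, hcd, hd⟩ := stepTowards hc hvc
      refine Or.inr ⟨d, ⟨hcd, ?_⟩, ⟨by omega, by omega⟩⟩
      intro he; subst he; omega
  · rintro (rfl | ⟨d, ⟨hcd, hdu⟩, h1, h2⟩)
    · exact inCone_self huc
    · refine ⟨by omega, ?_⟩
      have cu : T.dist v u = T.dist u v := dist_comm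
      have cv : T.dist v c = T.dist c v := dist_comm
      have cd : T.dist v d = T.dist d v := dist_comm
      rcases adj_dist hc ha (x := v) huc with h3 | h3
      · -- dist v c = dist v u + 1 : contradiction via TP
        exfalso
        exact TP hc ha (x := v) huc.symm hcd (Ne.symm hdu) (by omega) (by omega)
      · omega

end Cone

lemma noAdjDiffCones_aux (hc : T.Connected) (ha : T.IsAcyclic) {c d₁ d₂ v₁ v₂ : V}
    (h1 : T.Adj c d₁) (h2 : T.Adj c d₂) (hne : d₁ ≠ d₂)
    (m1 : T.dist c v₁ = T.dist d₁ v₁ + 1) (m2 : T.dist c v₂ = T.dist d₂ v₂ + 1)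
    (hadj : T.Adj v₁ v₂) (hord : T.dist c v₂ = T.dist c v₁ + 1) : False := by
  have t1 : T.dist d₁ v₂ ≤ T.dist d₁ v₁ + 1 := by
    have ht := hc.dist_triangle (u := d₁) (v := v₁) (w := v₂)
    have h12 : T.dist v₁ v₂ = 1 := (T.dist_eq_one_iff_adj).mpr hadj
    omega
  have t2 : T.dist c v₂ ≤ T.dist d₁ v₂ + 1 := by
    have ht := hc.dist_triangle (u := c) (v := d₁) (w := v₂)
    have hcd : T.dist c d₁ = 1 := (T.dist_eq_one_iff_adj).mpr h1
    omega
  have c1 : T.dist v₂ d₁ = T.dist d₁ v₂ := dist_comm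
  have c2 : T.dist v₂ d₂ = T.dist d₂ v₂ := dist_comm
  have c3 : T.dist v₂ c = T.dist c v₂ := dist_comm
  exact TP hc ha (x := v₂) h1 h2 hne (by omega) (by omega)

/-- Vertices lying in branches of distinct neighbors of `c` are never adjacent. -/
lemma noAdjDiffCones (hc : T.Connected) (ha : T.IsAcyclic) {c d₁ d₂ v₁ v₂ : V}
    (h1 : T.Adj c d₁) (h2 : T.Adj c d₂) (hne : d₁ ≠ d₂)
    (m1 : T.dist c v₁ = T.dist d₁ v₁ + 1) (m2 : T.dist c v₂ = T.dist d₂ v₂ + 1) :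
    ¬ T.Adj v₁ v₂ := by
  intro hadj
  rcases adj_dist hc ha (x := c) hadj with h3 | h3
  · exact noAdjDiffCones_aux hc ha h1 h2 hne m1 m2 hadj h3
  · exact noAdjDiffCones_aux hc ha h2 h1 hne.symm m2 m1 hadj.symm h3

section Glue

variable {A : Type*} {φ : V → A}

lemma EquivOn.congr {P0 Q0 P1 Q1 : V → Prop} {a b : V}
    (hp : ∀ v, P1 v ↔ P0 v) (hq : ∀ w, Q1 w ↔ Q0 w)
    (h : EquivOn T φ P0 Q0 a b) : EquivOn T φ P1 Q1 a b := by
  obtain ⟨f, ⟨hadj, hcol⟩, hcen⟩ := h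
  refine ⟨(Equiv.subtypeEquivRight hp).trans (f.trans (Equiv.subtypeEquivRight hq).symm),
    ⟨fun u w => ?_, fun v => ?_⟩, fun v hv => ?_⟩
  · simpa using hadj (Equiv.subtypeEquivRight hp u) (Equiv.subtypeEquivRight hp w)
  · simpa using hcol (Equiv.subtypeEquivRight hp v)
  · simpa using hcen (Equiv.subtypeEquivRight hp v) (by simpa using hv)

variable (T) in
/-- Forward map for gluing branch isomorphisms into a ball/branch isomorphism. -/
noncomputable def glueFun (c c' : V) (r : ℕ) (Dp Dq : V → Prop)
    (τ : {d // Dp d} ≃ {d // Dq d})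
    (F : ∀ d : {d // Dp d}, {v // inCone T r c (d : V) v} ≃ {v // inCone T r c' ((τ d : V)) v}) :
    {v // v = c ∨ ∃ d, Dp d ∧ inCone T r c d v} →
      {w // w = c' ∨ ∃ d, Dq d ∧ inCone T r c' d w} :=
  fun v =>
    letI := Classical.dec ((v : V) = c)
    if hvc : (v : V) = c then ⟨c', Or.inl rfl⟩
    else
      have hex : ∃ d : {d // Dp d}, inCone T r c (d : V) (v : V) := by
        rcases v.2 with h | ⟨d, hd, hco⟩
        · exact absurd h hvc
        · exact ⟨⟨d, hd⟩, hco⟩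
      ⟨((F (Classical.choose hex)) ⟨(v : V), Classical.choose_spec hex⟩ : V),
        Or.inr ⟨(τ (Classical.choose hex) : V), (τ (Classical.choose hex)).2,
          ((F (Classical.choose hex)) ⟨(v : V), Classical.choose_spec hex⟩).2⟩⟩

lemma glueFun_c {c c' : V} {r : ℕ} {Dp Dq : V → Prop}
    (τ : {d // Dp d} ≃ {d // Dq d})
    (F : ∀ d : {d // Dp d}, {v // inCone T r c (d : V) v} ≃ {v // inCone T r c' ((τ d : V)) v})
    (v : {v // v = c ∨ ∃ d, Dp d ∧ inCone T r c d v}) (hvc : (v : V) = c) :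
    (glueFun T c c' r Dp Dq τ F v : V) = c' := by
  simp [glueFun, hvc]

lemma glueFun_spec {c c' : V} {r : ℕ} {Dp Dq : V → Prop}
    (τ : {d // Dp d} ≃ {d // Dq d})
    (F : ∀ d : {d // Dp d}, {v // inCone T r c (d : V) v} ≃ {v // inCone T r c' ((τ d : V)) v})
    (v : {v // v = c ∨ ∃ d, Dp d ∧ inCone T r c d v}) (hvc : (v : V) ≠ c) :
    ∃ (d : {d // Dp d}) (hco : inCone T r c (d : V) (v : V)),
      (glueFun T c c' r Dp Dq τ F v : V) = ((F d) ⟨(v : V), hco⟩ : V) := by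
  have hex : ∃ d : {d // Dp d}, inCone T r c (d : V) (v : V) := by
    rcases v.2 with h | ⟨d, hd, hco⟩
    · exact absurd h hvc
    · exact ⟨⟨d, hd⟩, hco⟩
  refine ⟨Classical.choose hex, Classical.choose_spec hex, ?_⟩
  simp only [glueFun, dif_neg hvc]

/-- Gluing branch isomorphisms over a bijection of allowed directions. -/
lemma glue (hc : T.Connected) (ha : T.IsAcyclic) {c c' : V} {r : ℕ} {Dp Dq : V → Prop}
    (hDp : ∀ d, Dp d → T.Adj c d) (hDq : ∀ d, Dq d → T.Adj c' d)
    (τ : {d // Dp d} ≃ {d // Dq d}) (hcol : φ c = φ c')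
    (hcones : ∀ d : {d // Dp d},
      EquivOn T φ (inCone T r c (d : V)) (inCone T r c' ((τ d : V))) (d : V) ((τ d : V))) :
    EquivOn T φ (fun v => v = c ∨ ∃ d, Dp d ∧ inCone T r c d v)
      (fun w => w = c' ∨ ∃ d, Dq d ∧ inCone T r c' d w) c c' := by
  classical
  choose F hPIso hcen using hcones
  set g := glueFun T c c' r Dp Dq τ F with hg
  -- uniqueness of directions
  have uniqP : ∀ (v : V) (d₁ d₂ : {d // Dp d}),
      inCone T r c (d₁ : V) v → inCone T r c (d₂ : V) v → d₁ = d₂ := by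
    intro v d₁ d₂ hh1 hh2
    exact Subtype.ext (cone_dir_unique hc ha (hDp _ d₁.2) (hDp _ d₂.2) hh1.2 hh2.2)
  have uniqQ : ∀ (w : V) (d₁ d₂ : {d // Dq d}),
      inCone T r c' (d₁ : V) w → inCone T r c' (d₂ : V) w → d₁ = d₂ := by
    intro w d₁ d₂ hh1 hh2
    exact Subtype.ext (cone_dir_unique hc ha (hDq _ d₁.2) (hDq _ d₂.2) hh1.2 hh2.2)
  -- membership of images
  have himg : ∀ (v : {v // v = c ∨ ∃ d, Dp d ∧ inCone T r c d v})
      (hvc : (v : V) ≠ c) (d : {d // Dp d}) (hco : inCone T r c (d : V) (v : V)),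
      (g v : V) = ((F d) ⟨(v : V), hco⟩ : V) ∧ inCone T r c' ((τ d : V)) (g v : V) := by
    intro v hvc d hco
    obtain ⟨d₀, hco₀, he⟩ := glueFun_spec τ F v hvc
    obtain rfl := uniqP _ d₀ d hco₀ hco
    exact ⟨by rw [he], by rw [he]; exact ((F d₀) ⟨(v : V), hco⟩).2⟩
  -- injectivity
  have hinj : Function.Injective g := by
    intro v₁ v₂ he
    have hev : (g v₁ : V) = (g v₂ : V) := by rw [he]
    by_cases h1 : (v₁ : V) = c <;> by_cases h2 : (v₂ : V) = c
    · exact Subtype.ext (by rw [h1, h2])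
    · exfalso
      obtain ⟨d, hco, hval⟩ := glueFun_spec τ F v₂ h2
      have hmem := ((F d) ⟨(v₂ : V), hco⟩).2
      rw [← hval, ← hev, glueFun_c τ F v₁ h1] at hmem
      exact hmem.ne_c rfl
    · exfalso
      obtain ⟨d, hco, hval⟩ := glueFun_spec τ F v₁ h1
      have hmem := ((F d) ⟨(v₁ : V), hco⟩).2
      rw [← hval, hev, glueFun_c τ F v₂ h2] at hmem
      exact hmem.ne_c rfl
    · obtain ⟨d₁, hco₁, hval₁⟩ := glueFun_spec τ F v₁ h1
      obtain ⟨d₂, hco₂, hval₂⟩ := glueFun_spec τ F v₂ h2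
      have hmem₁ := ((F d₁) ⟨(v₁ : V), hco₁⟩).2
      have hmem₂ := ((F d₂) ⟨(v₂ : V), hco₂⟩).2
      rw [← hval₁] at hmem₁
      rw [← hval₂] at hmem₂
      rw [hev] at hmem₁
      have hd : d₁ = d₂ := τ.injective (uniqQ _ _ _ hmem₁ hmem₂)
      subst hd
      have : (F d₁) ⟨(v₁ : V), hco₁⟩ = (F d₁) ⟨(v₂ : V), hco₂⟩ := by
        apply Subtype.ext; rw [← hval₁, ← hval₂, hev]
      have h9 := (F d₁).injective this
      exact Subtype.ext (congrArg (fun z : {v // inCone T r c (d₁ : V) v} => (z : V)) h9)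
  -- surjectivity
  have hsurj : Function.Surjective g := by
    intro w
    by_cases hwc : (w : V) = c'
    · refine ⟨⟨c, Or.inl rfl⟩, Subtype.ext ?_⟩
      rw [glueFun_c τ F _ rfl, hwc]
    · have hw2 := w.2
      rcases hw2 with h | ⟨d', hd', hco'⟩
      · exact absurd h hwc
      · set dq : {d // Dq d} := ⟨d', hd'⟩ with hdq
        set d : {d // Dp d} := τ.symm dq with hd
        have htd : τ d = dq := τ.apply_symm_apply dq
        have hco'' : inCone T r c' ((τ d : V)) (w : V) := by rw [htd]; exact hco'
        set v₀ := (F d).symm ⟨(w : V), hco''⟩ with hv₀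
        have hv₀m : inCone T r c (d : V) (v₀ : V) := v₀.2
        have hv₀P : (v₀ : V) = c ∨ ∃ dd, Dp dd ∧ inCone T r c dd (v₀ : V) :=
          Or.inr ⟨(d : V), d.2, hv₀m⟩
        refine ⟨⟨(v₀ : V), hv₀P⟩, Subtype.ext ?_⟩
        have hne : ((⟨(v₀ : V), hv₀P⟩ : {v // v = c ∨ ∃ d, Dp d ∧ inCone T r c d v}) : V) ≠ c :=
          hv₀m.ne_c
        obtain ⟨he, _⟩ := himg _ hne d hv₀m
        rw [he]
        have : (⟨(v₀ : V), hv₀m⟩ : {v // inCone T r c (d : V) v}) = v₀ := Subtype.coe_eta _ _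
        rw [this, hv₀]
        exact congrArg (fun z : {v // inCone T r c' ((τ d : V)) v} => (z : V))
          (Equiv.apply_symm_apply (F d) ⟨(w : V), hco''⟩)
  have hbij : Function.Bijective g := ⟨hinj, hsurj⟩
  refine ⟨Equiv.ofBijective g hbij, ⟨?_, ?_⟩, ?_⟩
  · -- adjacency
    have key : ∀ (u w : {v // v = c ∨ ∃ d, Dp d ∧ inCone T r c d v}),
        (u : V) = c → (w : V) ≠ c → (T.Adj (u : V) (w : V) ↔ T.Adj (g u : V) (g w : V)) := by
      intro u w hu hw
      obtain ⟨d, hco, hval⟩ := glueFun_spec τ F w hw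
      have hmem : inCone T r c' ((τ d : V)) (g w : V) := by
        rw [hval]; exact ((F d) ⟨(w : V), hco⟩).2
      have hgu : (g u : V) = c' := glueFun_c τ F u hu
      have left : T.Adj (u : V) (w : V) ↔ (w : V) = (d : V) := by
        rw [hu]
        constructor
        · intro hadj
          have h1 : T.dist c (w : V) = 1 := (T.dist_eq_one_iff_adj).mpr hadj
          have h2 := hco.2
          have h3 : T.dist (d : V) (w : V) = 0 := by omega
          exact ((hc.dist_eq_zero_iff).mp h3).symm
        · intro hwd; rw [hwd]; exact hDp _ d.2
      have right : T.Adj (g u : V) (g w : V) ↔ (g w : V) = ((τ d : V)) := by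
        rw [hgu]
        constructor
        · intro hadj
          have h1 : T.dist c' (g w : V) = 1 := (T.dist_eq_one_iff_adj).mpr hadj
          have h2 := hmem.2
          have h3 : T.dist ((τ d : V)) (g w : V) = 0 := by omega
          exact ((hc.dist_eq_zero_iff).mp h3).symm
        · intro hwd; rw [hwd]; exact hDq _ (τ d).2
      rw [left, right, hval]
      constructor
      · intro hwd
        have : (⟨(w : V), hco⟩ : {v // inCone T r c (d : V) v}) =
            ⟨(d : V), inCone_self (hDp _ d.2)⟩ := Subtype.ext hwd
        rw [this]
        exact hcen d _ rfl
      · intro hfd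
        have h2 : ((F d) ⟨(d : V), inCone_self (hDp _ d.2)⟩ : V) = ((τ d : V)) :=
          hcen d _ rfl
        have : (F d) ⟨(w : V), hco⟩ = (F d) ⟨(d : V), inCone_self (hDp _ d.2)⟩ :=
          Subtype.ext (by rw [hfd, h2])
        exact congrArg Subtype.val ((F d).injective this)
    intro u w
    simp only [Equiv.ofBijective_apply]
    by_cases h1 : (u : V) = c <;> by_cases h2 : (w : V) = c
    · rw [glueFun_c τ F u h1, glueFun_c τ F w h2, h1, h2]
      exact iff_of_false (T.irrefl) (T.irrefl)
    · exact key u w h1 h2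
    · have := key w u h2 h1
      rw [T.adj_comm (u : V) (w : V), T.adj_comm (g u : V) (g w : V)]
      exact this
    · obtain ⟨d₁, hco₁, hval₁⟩ := glueFun_spec τ F u h1
      obtain ⟨d₂, hco₂, hval₂⟩ := glueFun_spec τ F w h2
      by_cases hd : d₁ = d₂
      · subst hd
        have := (hPIso d₁).1 ⟨(u : V), hco₁⟩ ⟨(w : V), hco₂⟩
        rw [hval₁, hval₂]
        exact this
      · have hdv : (d₁ : V) ≠ (d₂ : V) := fun he => hd (Subtype.ext he)
        have hmem₁ : inCone T r c' ((τ d₁ : V)) (g u : V) := by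
          rw [hval₁]; exact ((F d₁) ⟨(u : V), hco₁⟩).2
        have hmem₂ : inCone T r c' ((τ d₂ : V)) (g w : V) := by
          rw [hval₂]; exact ((F d₂) ⟨(w : V), hco₂⟩).2
        have hdv' : ((τ d₁ : V)) ≠ ((τ d₂ : V)) := by
          intro he
          exact hd (τ.injective (Subtype.ext he))
        refine iff_of_false ?_ ?_
        · exact noAdjDiffCones hc ha (hDp _ d₁.2) (hDp _ d₂.2) hdv hco₁.2 hco₂.2
        · exact noAdjDiffCones hc ha (hDq _ (τ d₁).2) (hDq _ (τ d₂).2) hdv' hmem₁.2 hmem₂.2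
  · -- colors
    intro v
    simp only [Equiv.ofBijective_apply]
    by_cases h1 : (v : V) = c
    · rw [glueFun_c τ F v h1, h1]; exact hcol.symm
    · obtain ⟨d, hco, hval⟩ := glueFun_spec τ F v h1
      rw [hval]
      exact (hPIso d).2 ⟨(v : V), hco⟩
  · -- center
    intro v hv
    simp only [Equiv.ofBijective_apply]
    exact glueFun_c τ F v hv

end Glue

section Bridge

variable {A : Type*} {φ : V → A}

lemma ballEquiv_iff {n : ℕ} {x y : V} :
    BallEquiv T φ n x y ↔
      EquivOn T φ (fun v => T.dist x v ≤ n) (fun v => T.dist y v ≤ n) x y := by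
  constructor
  · rintro ⟨f, hcenter, hadj, hcol⟩
    refine ⟨f, ⟨hadj, hcol⟩, fun v hv => ?_⟩
    have he : v = ⟨x, by simp [SimpleGraph.dist_self]⟩ := Subtype.ext hv
    rw [he]; exact hcenter
  · rintro ⟨f, ⟨hadj, hcol⟩, hcen⟩
    exact ⟨f, hcen _ rfl, hadj, hcol⟩

lemma ballEquiv_refl {n : ℕ} {x : V} : BallEquiv T φ n x x := by
  rw [ballEquiv_iff]
  exact ⟨Equiv.refl _, ⟨fun u w => Iff.rfl, fun v => rfl⟩, fun v hv => hv⟩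

lemma ballEquiv_symm {n : ℕ} {x y : V} (h : BallEquiv T φ n x y) : BallEquiv T φ n y x := by
  rw [ballEquiv_iff] at h ⊢
  exact h.symm (by simp [SimpleGraph.dist_self])

lemma ballEquiv_trans {n : ℕ} {x y z : V} (h1 : BallEquiv T φ n x y)
    (h2 : BallEquiv T φ n y z) : BallEquiv T φ n x z := by
  rw [ballEquiv_iff] at h1 h2 ⊢
  exact h1.trans h2

variable (hc : T.Connected) (ha : T.IsAcyclic)

/-- The image of the center is at the same distances. -/
lemma center_dist (hc : T.Connected) (ha : T.IsAcyclic) {n : ℕ} {x y : V}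
    (f : {v // T.dist x v ≤ n} ≃ {v // T.dist y v ≤ n})
    (hadj : ∀ u w : {v // T.dist x v ≤ n}, T.Adj (u : V) (w : V) ↔ T.Adj (f u : V) (f w : V))
    (hcen : ∀ v : {v // T.dist x v ≤ n}, (v : V) = x → (f v : V) = y)
    {u : V} (hu : T.dist x u ≤ n) :
    T.dist y ((f ⟨u, hu⟩ : V)) = T.dist x u := by
  have hx : T.dist x x ≤ n := by simp [SimpleGraph.dist_self]
  have h0 := dist_map hc ha f hadj hx hu
  rwa [hcen ⟨x, hx⟩ rfl] at h0

/-- Restriction of a ball isomorphism to a smaller ball. -/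
lemma restrict_ball (hc : T.Connected) (ha : T.IsAcyclic) {n : ℕ} {x y : V}
    (f : {v // T.dist x v ≤ n} ≃ {v // T.dist y v ≤ n}) (hf : PIso T φ f)
    (hcen : ∀ v : {v // T.dist x v ≤ n}, (v : V) = x → (f v : V) = y)
    {u : V} {r : ℕ} (hu : T.dist x u ≤ n) (hur : T.dist x u + r ≤ n) :
    BallEquiv T φ r u ((f ⟨u, hu⟩ : V)) := by
  rw [ballEquiv_iff]
  have hyu : T.dist y ((f ⟨u, hu⟩ : V)) = T.dist x u := center_dist hc ha f hf.1 hcen hu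
  have h1 : ∀ v, T.dist u v ≤ r → T.dist x v ≤ n := by
    intro v hv
    have := hc.dist_triangle (u := x) (v := u) (w := v); omega
  have h2 : ∀ w, T.dist ((f ⟨u, hu⟩ : V)) w ≤ r → T.dist y w ≤ n := by
    intro w hw
    have := hc.dist_triangle (u := y) (v := ((f ⟨u, hu⟩ : V))) (w := w); omega
  have hiff : ∀ (v : V) (hv : T.dist x v ≤ n),
      T.dist u v ≤ r ↔ T.dist ((f ⟨u, hu⟩ : V)) ((f ⟨v, hv⟩ : V)) ≤ r := by
    intro v hv
    rw [dist_map hc ha f hf.1 hu hv]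
  refine ⟨restrictEquiv f h1 h2 hiff, hf.restrict h1 h2 hiff, fun v hv => ?_⟩
  rw [restrictEquiv_coe]
  have he : (⟨(v : V), h1 _ v.2⟩ : {v // T.dist x v ≤ n}) = ⟨u, hu⟩ := Subtype.ext hv
  rw [he]

/-- Restriction of a ball isomorphism to a branch. -/
lemma restrict_cone (hc : T.Connected) (ha : T.IsAcyclic) {n : ℕ} {x y : V}
    (f : {v // T.dist x v ≤ n} ≃ {v // T.dist y v ≤ n}) (hf : PIso T φ f)
    (hcen : ∀ v : {v // T.dist x v ≤ n}, (v : V) = x → (f v : V) = y)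
    {c d : V} (hcd : T.Adj c d) {r : ℕ} (hcb : T.dist x c ≤ n) (hdb : T.dist x d ≤ n)
    (hdr : T.dist x d + r ≤ n) :
    EquivOn T φ (inCone T r c d) (inCone T r ((f ⟨c, hcb⟩ : V)) ((f ⟨d, hdb⟩ : V)))
      d ((f ⟨d, hdb⟩ : V)) := by
  have hyd : T.dist y ((f ⟨d, hdb⟩ : V)) = T.dist x d := center_dist hc ha f hf.1 hcen hdb
  have h1 : ∀ v, inCone T r c d v → T.dist x v ≤ n := by
    intro v hv
    have := hc.dist_triangle (u := x) (v := d) (w := v)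
    have h2 := hv.1; omega
  have h2 : ∀ w, inCone T r ((f ⟨c, hcb⟩ : V)) ((f ⟨d, hdb⟩ : V)) w → T.dist y w ≤ n := by
    intro w hw
    have := hc.dist_triangle (u := y) (v := ((f ⟨d, hdb⟩ : V))) (w := w)
    have h2 := hw.1; omega
  have hiff : ∀ (v : V) (hv : T.dist x v ≤ n),
      inCone T r c d v ↔
        inCone T r ((f ⟨c, hcb⟩ : V)) ((f ⟨d, hdb⟩ : V)) ((f ⟨v, hv⟩ : V)) := by
    intro v hv
    unfold inCone
    rw [dist_map hc ha f hf.1 hdb hv, dist_map hc ha f hf.1 hcb hv]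
  refine ⟨restrictEquiv f h1 h2 hiff, hf.restrict h1 h2 hiff, fun v hv => ?_⟩
  rw [restrictEquiv_coe]
  have he : (⟨(v : V), h1 _ v.2⟩ : {v // T.dist x v ≤ n}) = ⟨d, hdb⟩ := Subtype.ext hv
  rw [he]

/-- A ball isomorphism induces a bijection between the neighbors of the centers. -/
lemma nbr_equiv (hc : T.Connected) (ha : T.IsAcyclic) {n : ℕ} {x y : V}
    (f : {v // T.dist x v ≤ n} ≃ {v // T.dist y v ≤ n}) (hf : PIso T φ f)
    (hcen : ∀ v : {v // T.dist x v ≤ n}, (v : V) = x → (f v : V) = y)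
    {c : V} (hcb : T.dist x c ≤ n) (hc1 : T.dist x c + 1 ≤ n) :
    ∃ τ : {d // T.Adj c d} ≃ {d // T.Adj ((f ⟨c, hcb⟩ : V)) d},
      ∀ (d : {d // T.Adj c d}) (hd : T.dist x (d : V) ≤ n), (τ d : V) = (f ⟨(d : V), hd⟩ : V) := by
  have hyc : T.dist y ((f ⟨c, hcb⟩ : V)) = T.dist x c := center_dist hc ha f hf.1 hcen hcb
  have h1 : ∀ v, T.Adj c v → T.dist x v ≤ n := by
    intro v hv
    have := hc.dist_triangle (u := x) (v := c) (w := v)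
    have h2 : T.dist c v = 1 := (T.dist_eq_one_iff_adj).mpr hv
    omega
  have h2 : ∀ w, T.Adj ((f ⟨c, hcb⟩ : V)) w → T.dist y w ≤ n := by
    intro w hw
    have := hc.dist_triangle (u := y) (v := ((f ⟨c, hcb⟩ : V))) (w := w)
    have h2 : T.dist ((f ⟨c, hcb⟩ : V)) w = 1 := (T.dist_eq_one_iff_adj).mpr hw
    omega
  have hiff : ∀ (v : V) (hv : T.dist x v ≤ n),
      T.Adj c v ↔ T.Adj ((f ⟨c, hcb⟩ : V)) ((f ⟨v, hv⟩ : V)) :=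
    fun v hv => hf.1 ⟨c, hcb⟩ ⟨v, hv⟩
  refine ⟨restrictEquiv f h1 h2 hiff, fun d hd => ?_⟩
  rw [restrictEquiv_coe]

/-- Glue branch isomorphisms into a ball isomorphism. -/
lemma glue_ball (hc : T.Connected) (ha : T.IsAcyclic) {c c' : V} {r : ℕ} (hcol : φ c = φ c')
    (τ : {d // T.Adj c d} ≃ {d // T.Adj c' d})
    (hcones : ∀ d : {d // T.Adj c d},
      EquivOn T φ (inCone T r c (d : V)) (inCone T r c' ((τ d : V))) (d : V) ((τ d : V))) :
    BallEquiv T φ (r + 1) c c' := by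
  rw [ballEquiv_iff]
  exact EquivOn.congr (fun v => ball_char hc) (fun w => ball_char hc)
    (glue hc ha (fun d hd => hd) (fun d hd => hd) τ hcol hcones)

/-- Glue branch isomorphisms into a bigger branch isomorphism. -/
lemma glue_cone (hc : T.Connected) (ha : T.IsAcyclic) {u c u' c' : V} {r : ℕ}
    (huc : T.Adj u c) (huc' : T.Adj u' c') (hcol : φ c = φ c')
    (τ : {d // T.Adj c d ∧ d ≠ u} ≃ {d // T.Adj c' d ∧ d ≠ u'})
    (hcones : ∀ d : {d // T.Adj c d ∧ d ≠ u},
      EquivOn T φ (inCone T r c (d : V)) (inCone T r c' ((τ d : V))) (d : V) ((τ d : V))) :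
    EquivOn T φ (inCone T (r + 1) u c) (inCone T (r + 1) u' c') c c' :=
  EquivOn.congr (fun v => cone_char hc ha huc) (fun w => cone_char hc ha huc')
    (glue hc ha (fun d hd => hd.1) (fun d hd => hd.1) τ hcol hcones)

end Bridge

section Step

variable {A : Type*} {φ : V → A}

/-- Key step: if balls of radius `R+1` around `u` and its image differ, some farther
neighbor has differing balls of radius `R`. -/
lemma step (hc : T.Connected) (ha : T.IsAcyclic) {n : ℕ} {x y : V}
    (f : {v // T.dist x v ≤ n} ≃ {v // T.dist y v ≤ n}) (hf : PIso T φ f)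
    (hcen : ∀ v : {v // T.dist x v ≤ n}, (v : V) = x → (f v : V) = y)
    {u : V} {R : ℕ} (hu : T.dist x u ≤ n) (hR1 : 1 ≤ R) (hRn : T.dist x u + R = n)
    (hneg : ¬ BallEquiv T φ (R + 1) u ((f ⟨u, hu⟩ : V))) :
    ∃ u', T.Adj u u' ∧ T.dist x u' = T.dist x u + 1 ∧
      ∀ (hu' : T.dist x u' ≤ n), ¬ BallEquiv T φ R u' ((f ⟨u', hu'⟩ : V)) := by
  classical
  by_contra hcon
  push_neg at hcon
  obtain ⟨R', rfl⟩ : ∃ R', R = R' + 1 := ⟨R - 1, by omega⟩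
  apply hneg
  set m := T.dist x u with hm
  set v := (f ⟨u, hu⟩ : V) with hv
  obtain ⟨τ, hτ⟩ := nbr_equiv hc ha f hf hcen hu (by omega)
  refine glue_ball hc ha (hf.2 ⟨u, hu⟩).symm τ ?_
  intro d
  have hdu1 : T.dist u (d : V) = 1 := (T.dist_eq_one_iff_adj).mpr d.2
  have hdb : T.dist x (d : V) ≤ n := by
    have := hc.dist_triangle (u := x) (v := u) (w := (d : V)); omega
  have hτd : (τ d : V) = (f ⟨(d : V), hdb⟩ : V) := hτ d hdb
  set d' := (f ⟨(d : V), hdb⟩ : V) with hd'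
  rcases adj_dist hc ha (x := x) d.2 with hup | hdown
  swap
  · -- d is closer to x : restrict the global isomorphism
    have hC := restrict_cone hc ha f hf hcen d.2 (r := R' + 1) hu hdb (by omega)
    rw [hτd]
    exact hC
  · -- d is farther from x
    obtain ⟨hdb2, hball0⟩ := hcon (d : V) d.2 hup
    have hball : BallEquiv T φ (R' + 1) (d : V) d' := hball0
    rw [ballEquiv_iff] at hball
    obtain ⟨h, hhf, hhcen⟩ := hball
    have hvd' : T.Adj v d' := (hf.1 ⟨u, hu⟩ ⟨(d : V), hdb⟩).mp d.2
    have hcol2 : φ (d : V) = φ d' := (hf.2 ⟨(d : V), hdb⟩).symm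
    have hdd : T.dist (d : V) (d : V) ≤ R' + 1 := by simp [SimpleGraph.dist_self]
    obtain ⟨hσ, hσval⟩ := nbr_equiv hc ha h hhf hhcen (c := (d : V)) hdd
      (by simp [SimpleGraph.dist_self])
    have e : (h ⟨(d : V), hdd⟩ : V) = d' := hhcen _ rfl
    set ud : {a // T.Adj (d : V) a} := ⟨u, d.2.symm⟩ with hud
    obtain ⟨velem, hvelem⟩ :
        ∃ b0 : {b // T.Adj ((h ⟨(d : V), hdd⟩ : V)) b}, (b0 : V) = v :=
      ⟨⟨v, by rw [e]; exact hvd'.symm⟩, rfl⟩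
    set hσ' := hσ.trans (Equiv.swap (hσ ud) velem) with hσ'def
    have hσ'u : hσ' ud = velem := by
      rw [hσ'def, Equiv.trans_apply, Equiv.swap_apply_left]
    -- build the direction bijection avoiding u and v
    have h1' : ∀ a, (T.Adj (d : V) a ∧ a ≠ u) → T.Adj (d : V) a := fun a hA => hA.1
    have h2' : ∀ b, (T.Adj d' b ∧ b ≠ v) → T.Adj ((h ⟨(d : V), hdd⟩ : V)) b := by
      intro b hb; rw [e]; exact hb.1
    have hiff' : ∀ (a : V) (haP : T.Adj (d : V) a),
        (T.Adj (d : V) a ∧ a ≠ u) ↔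
          (T.Adj d' ((hσ' ⟨a, haP⟩ : V)) ∧ ((hσ' ⟨a, haP⟩ : V)) ≠ v) := by
      intro a haP
      have hAdj : T.Adj d' ((hσ' ⟨a, haP⟩ : V)) :=
        Eq.mp (congrArg (fun z : V => T.Adj z ((hσ' ⟨a, haP⟩ : V))) e) (hσ' ⟨a, haP⟩).2
      have keyiff : a = u ↔ ((hσ' ⟨a, haP⟩ : V)) = v := by
        constructor
        · intro hau
          have : (⟨a, haP⟩ : {a // T.Adj (d : V) a}) = ud := Subtype.ext hau
          rw [this, hσ'u]
          exact hvelem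
        · intro hval
          have : hσ' ⟨a, haP⟩ = velem := Subtype.ext (hval.trans hvelem.symm)
          rw [← hσ'u] at this
          have := hσ'.injective this
          exact congrArg Subtype.val this
      constructor
      · intro hA; exact ⟨hAdj, fun he => hA.2 (keyiff.mpr he)⟩
      · intro hB; exact ⟨haP, fun he => hB.2 (keyiff.mp he)⟩
    set τ' : {a // T.Adj (d : V) a ∧ a ≠ u} ≃ {b // T.Adj d' b ∧ b ≠ v} :=
      restrictEquiv hσ' h1' h2' hiff' with hτ'def
    -- branch isomorphisms for τ'
    have hcones' : ∀ a : {a // T.Adj (d : V) a ∧ a ≠ u},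
        EquivOn T φ (inCone T R' (d : V) (a : V)) (inCone T R' d' ((τ' a : V)))
          (a : V) ((τ' a : V)) := by
      intro a
      have haa : T.dist (d : V) (a : V) ≤ R' + 1 := by
        have : T.dist (d : V) (a : V) = 1 := (T.dist_eq_one_iff_adj).mpr a.2.1
        omega
      set b := hσ ⟨(a : V), a.2.1⟩ with hb
      have hbval : (b : V) = (h ⟨(a : V), haa⟩ : V) := hσval _ haa
      have hane : (⟨(a : V), a.2.1⟩ : {a // T.Adj (d : V) a}) ≠ ud :=
        fun he => a.2.2 (congrArg Subtype.val he)
      have hbne1 : b ≠ hσ ud := fun he => hane (hσ.injective he)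
      -- C1 : branch of a maps under h
      have C1 := restrict_cone hc ha h hhf hhcen a.2.1 (r := R') hdd haa
        (by have : T.dist (d : V) (a : V) = 1 := (T.dist_eq_one_iff_adj).mpr a.2.1; omega)
      rw [e, ← hbval] at C1
      -- C2 : branch of u maps under h
      have huu : T.dist (d : V) u ≤ R' + 1 := by
        have : T.dist (d : V) u = 1 := (T.dist_eq_one_iff_adj).mpr d.2.symm
        omega
      have C2 := restrict_cone hc ha h hhf hhcen d.2.symm (r := R') hdd huu
        (by have : T.dist (d : V) u = 1 := (T.dist_eq_one_iff_adj).mpr d.2.symm; omega)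
      rw [e] at C2
      have huσval : ((hσ ud : V)) = (h ⟨u, huu⟩ : V) := hσval _ huu
      rw [← huσval] at C2
      -- C3 : branch of u maps under f
      have C3 := restrict_cone hc ha f hf hcen d.2.symm (r := R') hdb hu (by omega)
      rw [← hd', ← hv] at C3
      have hτ'aval : ((τ' a : V)) = ((Equiv.swap (hσ ud) velem b : V)) := by
        rw [hτ'def, restrictEquiv_coe, hσ'def, Equiv.trans_apply, hb]
      by_cases hbv : (b : V) = v
      · have hbeq : b = velem := Subtype.ext (hbv.trans hvelem.symm)
        have hswap : Equiv.swap (hσ ud) velem b = hσ ud := by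
          rw [hbeq, Equiv.swap_apply_right]
        rw [hτ'aval, hswap]
        rw [hbv] at C1
        have C3s := C3.symm (inCone_self d.2.symm)
        exact C1.trans (C3s.trans C2)
      · have hbne2 : b ≠ velem := fun he => hbv ((congrArg Subtype.val he).trans hvelem)
        have hswap : Equiv.swap (hσ ud) velem b = b :=
          Equiv.swap_apply_of_ne_of_ne hbne1 hbne2
        rw [hτ'aval, hswap]
        exact C1
    have := glue_cone hc ha d.2 hvd' hcol2 τ' hcones'
    rw [hτd]
    exact this

end Step

section Final

variable {A : Type*} {φ : V → A}

lemma part1 (hc : T.Connected) (ha : T.IsAcyclic) {x y : V} {n : ℕ}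
    (hE : BallEquiv T φ n x y) (hN : ¬ BallEquiv T φ (n + 1) x y)
    {m : ℕ} (h1 : 1 ≤ m) (h2 : m ≤ n) :
    ∃ x' y' : V, T.dist x x' = m ∧ T.dist y y' = m ∧
      ¬ BallEquiv T φ (n - m + 1) x' y' ∧ BallEquiv T φ (n - m) x' y' := by
  rw [ballEquiv_iff] at hE
  obtain ⟨f, hf, hcen⟩ := hE
  have key : ∀ k, 1 ≤ k → k ≤ n →
      ∃ u, T.dist x u = k ∧
        ∀ (hu : T.dist x u ≤ n), ¬ BallEquiv T φ (n - k + 1) u ((f ⟨u, hu⟩ : V)) := by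
    intro k
    induction k with
    | zero => intro h0; omega
    | succ k ih =>
      intro hk1 hkn
      by_cases hk0 : k = 0
      · subst hk0
        have hx : T.dist x x ≤ n := by simp [SimpleGraph.dist_self]
        have hxx : T.dist x x = 0 := SimpleGraph.dist_self
        have hneg : ¬ BallEquiv T φ (n + 1) x ((f ⟨x, hx⟩ : V)) := by
          rw [hcen ⟨x, hx⟩ rfl]; exact hN
        obtain ⟨u', hadj, hdist, hres⟩ := step hc ha f hf hcen hx (R := n)
          (by omega) (by omega) hneg
        refine ⟨u', by omega, fun hu' => ?_⟩
        have h9 : n - 1 + 1 = n := by omega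
        rw [h9]
        exact hres hu'
      · obtain ⟨u, hdu, hprev⟩ := ih (by omega) (by omega)
        have hu : T.dist x u ≤ n := by omega
        have hneg0 := hprev hu
        have h8 : n - k + 1 = (n - k - 1 + 1) + 1 := by omega
        rw [h8] at hneg0
        obtain ⟨u', hadj, hdist, hres⟩ := step hc ha f hf hcen hu
          (R := n - k - 1 + 1) (by omega) (by omega) hneg0
        refine ⟨u', by omega, fun hu' => ?_⟩
        have h9 : n - (k + 1) + 1 = n - k - 1 + 1 := by omega
        rw [h9]
        exact hres hu'
  obtain ⟨u, hdu, hneg⟩ := key m h1 h2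
  have hu : T.dist x u ≤ n := by omega
  refine ⟨u, ((f ⟨u, hu⟩ : V)), hdu, ?_, hneg hu, ?_⟩
  · rw [center_dist hc ha f hf.1 hcen hu, hdu]
  · exact restrict_ball hc ha f hf hcen hu (by omega)

lemma part2 (hc : T.Connected) (ha : T.IsAcyclic) {x : V} {n : ℕ}
    (hs : IsSpecial T φ n x) {l : ℕ} (hl : l < n) :
    ∃ x', T.dist x x' = n - l ∧ IsSpecial T φ l x' := by
  obtain ⟨yy, zz, e1, e2, hne⟩ := hs
  have eyz : BallEquiv T φ n yy zz := ballEquiv_trans (ballEquiv_symm e1) e2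
  obtain ⟨y', z', hdy, hdz, hneq, heq⟩ := part1 hc ha eyz hne (m := n - l)
    (by omega) (by omega)
  have i1 : n - (n - l) + 1 = l + 1 := by omega
  have i2 : n - (n - l) = l := by omega
  rw [i1] at hneq
  rw [i2] at heq
  rw [ballEquiv_iff] at e1
  obtain ⟨g, hg, hgcen⟩ := e1
  have hy' : T.dist yy y' ≤ n := by omega
  set x' := (g.symm ⟨y', hy'⟩ : V) with hx'
  have hx'mem : T.dist x x' ≤ n := (g.symm ⟨y', hy'⟩).2
  have hgx' : (g ⟨x', hx'mem⟩ : V) = y' := by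
    have he : (⟨x', hx'mem⟩ : {v // T.dist x v ≤ n}) = g.symm ⟨y', hy'⟩ :=
      Subtype.coe_eta _ _
    rw [he, Equiv.apply_symm_apply]
  have hx : T.dist x x ≤ n := by simp [SimpleGraph.dist_self]
  have hdxx' : T.dist x x' = n - l := by
    have h0 := dist_map hc ha g hg.1 hx hx'mem
    rw [hgcen ⟨x, hx⟩ rfl, hgx'] at h0
    omega
  have hbe : BallEquiv T φ l x' y' := by
    have h5 := restrict_ball hc ha g hg hgcen hx'mem (r := l) (by omega)
    rwa [hgx'] at h5
  exact ⟨x', hdxx', y', z', hbe, ballEquiv_trans hbe heq, hneq⟩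

end Final

end STAux

theorem stmt_4 {V A : Type*} (T : SimpleGraph V) (φ : V → A) (k : ℕ)
    (hk : 2 ≤ k) (htree : T.IsTree) (hreg : ∀ v : V, (T.neighborSet v).ncard = k) :
    (∀ x y : V, ∀ n : ℕ, BallEquiv T φ n x y → ¬ BallEquiv T φ (n + 1) x y →
      ∀ m : ℕ, 1 ≤ m → m ≤ n →
        ∃ x' y' : V, T.dist x x' = m ∧ T.dist y y' = m ∧
          ¬ BallEquiv T φ (n - m + 1) x' y' ∧ BallEquiv T φ (n - m) x' y') ∧
    (∀ x : V, ∀ n : ℕ, IsSpecial T φ n x → ∀ l : ℕ, l < n →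
      ∃ x' : V, T.dist x x' = n - l ∧ IsSpecial T φ l x') := by
  have hc : T.Connected := htree.isConnected
  have ha : T.IsAcyclic := htree.IsAcyclic
  constructor
  · intro x y n hE hN m hm1 hm2
    exact STAux.part1 hc ha hE hN hm1 hm2
  · intro x n hs l hl
    exact STAux.part2 hc ha hs hl
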